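/- Let $X$ be a negative binomial random variable with $m$ successes and failure probability $p \in (0,1)$, so $\Pr(X = k) = \binom{k-1}{m-1} p^{k-m}(1-p)^m$ for integers $k \ge m$. Then for any integer $b \ge m$, $\Pr(X > b) = \Pr(X = b+1) \cdot \left(1 + \sum_{k=1}^{\infty} p^k \prod_{j=1}^{k} \frac{b+j}{b - m + 1 + j}\right)$, and the factor in parentheses satisfies $\frac{1}{1-p} \le 1 + \sum_{k=1}^{\infty} p^k \prod_{j=1}^{k} \frac{b+j}{b-m+1+j} \le \frac{1}{1 - p(1 + \frac{m-1}{b-m+1})}$, provided $p(1 + \frac{m-1}{b-m+1}) < 1$. -/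

import Mathlib

/-- The negative binomial pmf: number of trials until the `m`-th success,
failure probability `p`. -/
noncomputable def nbPMF (m : ℕ) (p : ℝ) (k : ℕ) : ℝ :=
  ((k - 1).choose (m - 1) : ℝ) * p ^ (k - m) * (1 - p) ^ m

/-- Tail of the negative binomial distribution: `Pr(X > x)`. -/
noncomputable def nbTail (m : ℕ) (p : ℝ) (x : ℕ) : ℝ := ∑' j : ℕ, nbPMF m p (x + 1 + j)

/-- The hypergeometric series factor of the NB tail:
`1 + ∑_{k=1}^∞ p^k ∏_{j=1}^k (b+j)/(b-m+1+j)`. -/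
noncomputable def hgFactor (m b : ℕ) (p : ℝ) : ℝ :=
  1 + ∑' k : ℕ, p ^ (k + 1) *
    ∏ j ∈ Finset.range (k + 1), (((b : ℝ) + (j + 1)) / ((b : ℝ) - m + 1 + (j + 1)))

set_option maxHeartbeats 1600000 in
theorem claim_tail_hypergeometric (p : ℝ) (hp : 0 < p) (hp1 : p < 1)
    (m b : ℕ) (hm : 1 ≤ m) (hb : m ≤ b)
    (hconv : p * (1 + ((m : ℝ) - 1) / ((b : ℝ) - m + 1)) < 1) :
    nbTail m p b = nbPMF m p (b + 1) * hgFactor m b p ∧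
    1 / (1 - p) ≤ hgFactor m b p ∧
    hgFactor m b p ≤ 1 / (1 - p * (1 + ((m : ℝ) - 1) / ((b : ℝ) - m + 1))) := by
  have hmb : (m : ℝ) ≤ b := by exact_mod_cast hb
  have hm1 : (0:ℝ) ≤ (m:ℝ) - 1 := by
    have : (1:ℝ) ≤ m := by exact_mod_cast hm
    linarith
  have hbm0 : (0:ℝ) < (b:ℝ) - m + 1 := by linarith
  set q : ℝ := 1 + ((m:ℝ) - 1) / ((b:ℝ) - m + 1) with hqdef
  have hq1 : (1:ℝ) ≤ q := by
    have : 0 ≤ ((m:ℝ) - 1) / ((b:ℝ) - m + 1) := div_nonneg hm1 hbm0.le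
    rw [hqdef]; linarith
  set r : ℝ := p * q with hrdef
  have hr0 : 0 ≤ r := mul_nonneg hp.le (by linarith)
  have hr1 : r < 1 := hconv
  have hp0 : (0:ℝ) ≤ p := hp.le
  have h1p : (0:ℝ) < 1 - p := by linarith
  have h1r : (0:ℝ) < 1 - r := by linarith
  -- the ratio
  set ratio : ℕ → ℝ := fun j => ((b : ℝ) + ((j:ℝ) + 1)) / ((b : ℝ) - m + 1 + ((j:ℝ) + 1))
    with hratiodef
  have hden : ∀ j : ℕ, (0:ℝ) < (b:ℝ) - m + 1 + ((j:ℝ) + 1) := by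
    intro j
    have : (0:ℝ) ≤ (j:ℝ) := Nat.cast_nonneg j
    linarith
  have hratio1 : ∀ j, 1 ≤ ratio j := by
    intro j
    rw [hratiodef]
    rw [le_div_iff₀ (hden j)]
    have : (0:ℝ) ≤ (j:ℝ) := Nat.cast_nonneg j
    linarith
  have hratioq : ∀ j, ratio j ≤ q := by
    intro j
    have heq : ratio j = 1 + ((m:ℝ) - 1) / ((b:ℝ) - m + 1 + ((j:ℝ) + 1)) := by
      rw [hratiodef]
      field_simp
      ring
    rw [heq, hqdef]
    have : ((m:ℝ) - 1) / ((b:ℝ) - m + 1 + ((j:ℝ) + 1)) ≤ ((m:ℝ) - 1) / ((b:ℝ) - m + 1) := by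
      apply div_le_div_of_nonneg_left hm1 hbm0
      have : (0:ℝ) ≤ (j:ℝ) := Nat.cast_nonneg j
      linarith
    linarith
  have hratio0 : ∀ j, 0 ≤ ratio j := fun j => le_trans zero_le_one (hratio1 j)
  -- the series terms
  set u : ℕ → ℝ := fun j => p ^ j * ∏ i ∈ Finset.range j, ratio i with hudef
  have hu0 : u 0 = 1 := by simp [hudef]
  have huprod1 : ∀ j, (1:ℝ) ≤ ∏ i ∈ Finset.range j, ratio i := by
    intro j
    calc (1:ℝ) = ∏ _i ∈ Finset.range j, (1:ℝ) := by simp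
      _ ≤ ∏ i ∈ Finset.range j, ratio i :=
          Finset.prod_le_prod (fun i _ => zero_le_one) (fun i _ => hratio1 i)
  have hulb : ∀ j, p ^ j ≤ u j := by
    intro j
    rw [hudef]
    exact le_mul_of_one_le_right (pow_nonneg hp0 j) (huprod1 j)
  have huub : ∀ j, u j ≤ r ^ j := by
    intro j
    rw [hudef, hrdef, mul_pow]
    apply mul_le_mul_of_nonneg_left _ (pow_nonneg hp0 j)
    calc ∏ i ∈ Finset.range j, ratio i ≤ ∏ _i ∈ Finset.range j, q :=
          Finset.prod_le_prod (fun i _ => hratio0 i) (fun i _ => hratioq i)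
      _ = q ^ j := by simp [Finset.prod_const]
  have hupos : ∀ j, 0 ≤ u j := fun j => le_trans (pow_nonneg hp0 j) (hulb j)
  have hsumu : Summable u :=
    Summable.of_nonneg_of_le hupos huub (summable_geometric_of_lt_one hr0 hr1)
  have hsumu1 : Summable (fun k => u (k + 1)) := (summable_nat_add_iff 1).2 hsumu
  have hsump1 : Summable (fun k : ℕ => p ^ (k + 1)) := by
    simp_rw [pow_succ']
    exact (summable_geometric_of_lt_one hp0 hp1).mul_left p
  have hsumr1 : Summable (fun k : ℕ => r ^ (k + 1)) := by
    simp_rw [pow_succ']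
    exact (summable_geometric_of_lt_one hr0 hr1).mul_left r
  have htsum_p : ∑' k : ℕ, p ^ (k + 1) = p * (1 - p)⁻¹ := by
    simp_rw [pow_succ']
    rw [tsum_mul_left, tsum_geometric_of_lt_one hp0 hp1]
  have htsum_r : ∑' k : ℕ, r ^ (k + 1) = r * (1 - r)⁻¹ := by
    simp_rw [pow_succ']
    rw [tsum_mul_left, tsum_geometric_of_lt_one hr0 hr1]
  -- hgFactor in terms of u
  have hhg : hgFactor m b p = 1 + ∑' k : ℕ, u (k + 1) := by
    simp only [hgFactor, hudef, hratiodef]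
  -- pmf formula
  have hpmf : ∀ j : ℕ, nbPMF m p (b + 1 + j)
      = ((b + j).choose (m - 1) : ℝ) * p ^ (b - m + 1 + j) * (1 - p) ^ m := by
    intro j
    rw [nbPMF, show b + 1 + j - 1 = b + j from by omega,
      show b + 1 + j - m = b - m + 1 + j from by omega]
  have hmain : ∀ j, nbPMF m p (b + 1 + j) = nbPMF m p (b + 1) * u j := by
    intro j
    induction j with
    | zero => simp [hu0]
    | succ k ih =>
      have hkey : ((b + (k + 1)).choose (m - 1) : ℝ) * ((b:ℝ) - m + 1 + ((k:ℝ) + 1))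
          = ((b + k).choose (m - 1) : ℝ) * ((b:ℝ) + ((k:ℝ) + 1)) := by
        have h := Nat.choose_mul_succ_eq (b + k) (m - 1)
        have h2 : b + k + 1 - (m - 1) = b + k + 2 - m := by omega
        rw [h2] at h
        have h3 : ((b + k + 2 - m : ℕ) : ℝ) = (b:ℝ) + k + 2 - m := by
          have : m ≤ b + k + 2 := by omega
          push_cast [this]
          ring
        have h4 := congrArg (fun x : ℕ => (x : ℝ)) h
        push_cast at h4
        rw [show ((b + k + 2 - m : ℕ) : ℝ) = (b:ℝ) + k + 2 - m from h3] at h4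
        rw [show b + (k + 1) = b + k + 1 from by ring]
        push_cast
        nlinarith [h4]
      have hu : u (k + 1) = u k * (p * ratio k) := by
        rw [hudef]
        simp only [Finset.prod_range_succ, pow_succ]
        ring
      have hne : ((b:ℝ) - m + 1 + ((k:ℝ) + 1)) ≠ 0 := ne_of_gt (hden k)
      have hC : (((b + (k + 1)).choose (m - 1) : ℕ) : ℝ)
          = ((b + k).choose (m - 1) : ℝ) * ratio k := by
        simp only [hratiodef]
        rw [mul_div_assoc', eq_div_iff hne]
        linarith [hkey]
      rw [hpmf, hu, ← mul_assoc, ← ih, hpmf, hC,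
        show b - m + 1 + (k + 1) = (b - m + 1 + k) + 1 from by omega, pow_succ]
      ring
  -- the tail identity
  have htail : nbTail m p b = nbPMF m p (b + 1) * ∑' j, u j := by
    rw [nbTail]
    simp_rw [hmain]
    exact tsum_mul_left
  have husum : ∑' j, u j = 1 + ∑' k : ℕ, u (k + 1) := by
    rw [Summable.tsum_eq_zero_add hsumu, hu0]
  refine ⟨?_, ?_, ?_⟩
  · rw [htail, husum, hhg]
  · rw [hhg]
    have hle : ∑' k : ℕ, p ^ (k + 1) ≤ ∑' k : ℕ, u (k + 1) :=
      Summable.tsum_le_tsum (fun k => hulb (k + 1)) hsump1 hsumu1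
    rw [htsum_p] at hle
    have : 1 / (1 - p) = 1 + p * (1 - p)⁻¹ := by field_simp; ring
    linarith
  · rw [hhg]
    have hle : ∑' k : ℕ, u (k + 1) ≤ ∑' k : ℕ, r ^ (k + 1) :=
      Summable.tsum_le_tsum (fun k => huub (k + 1)) hsumu1 hsumr1
    rw [htsum_r] at hle
    have : 1 / (1 - r) = 1 + r * (1 - r)⁻¹ := by field_simp; ring
    linarith
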